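/- Every λ-hyperconvex metric space is complete. -/

import Mathlib

/-- Every `λ`-hyperconvex metric space is complete. -/
theorem stmt_13 {M : Type*} [MetricSpace M] (lam : ℝ) (hlam : 1 ≤ lam)
    (hconv : ∀ (J ι : Type) (c : J → M) (ρ : J → ℝ) (x : ι → M) (r : ι → ℝ),
      (⋂ j, Metric.closedBall (c j) (ρ j)).Nonempty →
      (∀ i, x i ∈ ⋂ j, Metric.closedBall (c j) (ρ j)) →
      (∀ i i', dist (x i) (x i') ≤ r i + r i') →
      ((⋂ j, Metric.closedBall (c j) (ρ j)) ∩
        ⋂ i, Metric.closedBall (x i) (lam * r i)).Nonempty) :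
    CompleteSpace M := by
  apply Metric.complete_of_cauchySeq_tendsto
  intro x hx
  obtain ⟨R, hR0, hR⟩ := cauchySeq_bdd hx
  set r : ℕ → ℝ := fun n => ⨆ m : ℕ, dist (x n) (x (n + m)) with hr
  have hbdd : ∀ n, BddAbove (Set.range fun m : ℕ => dist (x n) (x (n + m))) := by
    intro n
    exact ⟨R, by rintro _ ⟨m, rfl⟩; exact (hR n (n + m)).le⟩
  have hrnonneg : ∀ n, 0 ≤ r n := by
    intro n
    exact Real.iSup_nonneg fun m => dist_nonneg
  have hle : ∀ n m, n ≤ m → dist (x n) (x m) ≤ r n := by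
    intro n m hnm
    have : dist (x n) (x (n + (m - n))) ≤ r n := le_ciSup (hbdd n) (m - n)
    rwa [Nat.add_sub_cancel' hnm] at this
  have h3 : ∀ i i', dist (x i) (x i') ≤ r i + r i' := by
    intro i i'
    rcases le_total i i' with h | h
    · exact le_add_of_le_of_nonneg (hle i i' h) (hrnonneg i')
    · rw [dist_comm]
      exact le_add_of_nonneg_of_le (hrnonneg i) (hle i' i h)
  have h2 : ∀ i : ℕ, x i ∈ ⋂ j : PUnit, Metric.closedBall ((fun _ => x 0) j)
      ((fun _ => R) j) := by
    intro i
    simp only [Set.mem_iInter, Metric.mem_closedBall]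
    exact fun _ => (hR i 0).le
  have h1 : (⋂ j : PUnit, Metric.closedBall ((fun _ => x 0) j)
      ((fun _ => R) j)).Nonempty :=
    ⟨x 0, h2 0⟩
  obtain ⟨y, -, hy⟩ := hconv PUnit ℕ (fun _ => x 0) (fun _ => R) x r h1 h2 h3
  simp only [Set.mem_iInter, Metric.mem_closedBall] at hy
  refine ⟨y, Metric.tendsto_atTop.2 fun ε hε => ?_⟩
  have hlam0 : 0 < lam := lt_of_lt_of_le one_pos hlam
  obtain ⟨N, hN⟩ := Metric.cauchySeq_iff.1 hx (ε / (2 * lam)) (by positivity)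
  refine ⟨N, fun n hn => ?_⟩
  have hrn : r n ≤ ε / (2 * lam) := by
    apply ciSup_le
    intro m
    exact (hN n hn (n + m) (le_trans hn (Nat.le_add_right n m))).le
  calc dist (x n) y ≤ lam * r n := by rw [dist_comm]; exact hy n
    _ ≤ lam * (ε / (2 * lam)) := by
        exact mul_le_mul_of_nonneg_left hrn hlam0.le
    _ = ε / 2 := by field_simp
    _ < ε := by linarith
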